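/- Soundness of MaxSAT resolution + cost-SR: let H₀ = {C₁∨b₁,…,C_m∨b_m} be a satisfiable set of hard clauses with blocking variables b₁,…,b_m, and S₀ = {¬b₁,…,¬b_m} the corresponding multiset of soft clauses. If a MaxSAT resolution + cost-SR derivation starting from (H₀,S₀) reaches a pair (H_t,S_t) such that the empty clause ⊥ occurs in S_t with multiplicity at least k, then cost(H₀) ≥ k, i.e., every total assignment satisfying H₀ falsifies at least k clauses of S₀. -/
import Mathlib


namespace PaperMaxSAT

/-- Variables are natural numbers. -/
abbrev Var := ℕ

/-- A literal is a variable together with a polarity. -/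
abbrev Lit := Var × Bool

/-- Negation of a literal. -/
def negLit (l : Lit) : Lit := (l.1, !l.2)

/-- A clause is a finite set of literals. -/
abbrev Clause := Finset Lit

/-- A CNF formula is a finite multiset of clauses. -/
abbrev CNF := Multiset Clause

/-- A tautological clause contains a literal together with its negation. -/
def isTaut (C : Clause) : Prop := ∃ l ∈ C, negLit l ∈ C

/-- The value of a substitution at a variable: a Boolean constant or a literal. -/
abbrev SubVal := Bool ⊕ Lit

/-- Negation on substitution values. -/
def negSV : SubVal → SubVal
  | .inl b => .inl !b
  | .inr l => .inr (negLit l)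

/-- A substitution maps each variable to `0`, `1` or a literal. -/
abbrev Sub := Var → SubVal

/-- Applying a substitution to a literal, respecting `σ(¬x) = ¬σ(x)`. -/
def appLit (σ : Sub) (l : Lit) : SubVal :=
  if l.2 then σ l.1 else negSV (σ l.1)

/-- The identity substitution. -/
def idSub : Sub := fun v => .inr (v, true)

/-- `σ(C) = 1` : some literal of `C` is mapped to true by `σ`. -/
def clauseTrue (σ : Sub) (C : Clause) : Prop := ∃ l ∈ C, appLit σ l = Sum.inl true

instance (σ : Sub) (C : Clause) : Decidable (clauseTrue σ C) := by
  unfold clauseTrue; infer_instance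

/-- `C↾σ` : the clause whose literals are the images under `σ` of the literals
of `C` mapped to literals (literals mapped to `0` are dropped). -/
def restrictClause (σ : Sub) (C : Clause) : Clause :=
  C.biUnion (fun l => match appLit σ l with
    | .inr m => {m}
    | _ => (∅ : Clause))

/-- `Γ↾σ` : restrict every clause of `Γ`; clauses mapped to `1` are removed. -/
def restrictCNF (σ : Sub) (Γ : CNF) : CNF :=
  (Γ.filter (fun C => ¬ clauseTrue σ C)).map (restrictClause σ)

/-- `σ ⊨ C` : `σ(C) = 1` or `σ(C)` is tautological. -/
def subSat (σ : Sub) (C : Clause) : Prop :=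
  clauseTrue σ C ∨ isTaut (restrictClause σ C)

/-- The assignment `¬C`, setting all literals of `C` to false. -/
def negSub (C : Clause) : Sub := fun v =>
  if (v, true) ∈ C then .inl false
  else if (v, false) ∈ C then .inl true
  else .inr (v, true)

/-- The substitution setting the literal `l` to true and touching nothing else. -/
def litSub (l : Lit) : Sub := fun v => if v = l.1 then .inl l.2 else .inr (v, true)

/-- Unit propagation derives the empty clause. -/
inductive UPFalse : CNF → Prop
  | empty {Γ : CNF} : (∅ : Clause) ∈ Γ → UPFalse Γ
  | step {Γ : CNF} (l : Lit) : ({l} : Clause) ∈ Γ →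
      UPFalse (restrictCNF (litSub l) Γ) → UPFalse Γ

/-- The unit clauses `¬l` for `l ∈ C`. -/
def negUnits (C : Clause) : CNF := C.val.map (fun l => ({negLit l} : Clause))

/-- `Γ ⊢₁ C` : unit propagation on `Γ↾¬C` produces the empty clause. -/
def UPimplies (Γ : CNF) (C : Clause) : Prop := UPFalse (Γ + negUnits C)

/-- `Γ ⊢₁ Δ` : `Γ ⊢₁ D` for every `D ∈ Δ`. -/
def UPimpliesAll (Γ Δ : CNF) : Prop := ∀ D ∈ Δ, UPimplies Γ D

/-- Total assignments. -/
abbrev TAssign := Var → Bool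

/-- A total assignment satisfies a clause. -/
def satC (α : TAssign) (C : Clause) : Prop := ∃ l ∈ C, α l.1 = l.2

instance (α : TAssign) (C : Clause) : Decidable (satC α C) := by
  unfold satC; infer_instance

/-- A total assignment satisfies a CNF. -/
def satCNF (α : TAssign) (Γ : CNF) : Prop := ∀ C ∈ Γ, satC α C

/-- `τ ∘ σ` : composition of a total assignment with a substitution. -/
def comp (τ : TAssign) (σ : Sub) : TAssign := fun v =>
  match σ v with
  | .inl b => b
  | .inr l => if l.2 then τ l.1 else !(τ l.1)

/-- `τ` extends the assignment `¬C`. -/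
def extendsNeg (τ : TAssign) (C : Clause) : Prop := ∀ l ∈ C, τ l.1 = !l.2

/-- The cost of a total assignment w.r.t. a set `B` of blocking variables:
the number of blocking variables set to true. -/
def cost (B : Finset Var) (α : TAssign) : ℕ := (B.filter (fun b => α b = true)).card

/-- The cost of a MaxSAT instance encoded with blocking variables `B`:
the minimum cost of a satisfying total assignment. -/
noncomputable def costCNF (B : Finset Var) (Γ : CNF) : ℕ :=
  sInf {k | ∃ α : TAssign, satCNF α Γ ∧ cost B α = k}

/-- `σ` witnesses that `C` is cost-SR w.r.t. `Γ` (with blocking variables `B`):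
the redundancy condition `Γ↾¬C ⊢₁ (Γ ∪ {C})↾σ` and the cost condition. -/
def CostSRwit (B : Finset Var) (Γ : CNF) (C : Clause) (σ : Sub) : Prop :=
  UPimpliesAll (restrictCNF (negSub C) Γ) (restrictCNF σ (C ::ₘ Γ)) ∧
  ∀ τ : TAssign, extendsNeg τ C → cost B (comp τ σ) ≤ cost B τ

/-- `C` is cost-SR w.r.t. `Γ`. -/
def CostSR (B : Finset Var) (Γ : CNF) (C : Clause) : Prop := ∃ σ, CostSRwit B Γ C σ

/-- A substitution which is an assignment: every value is `0`, `1`,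
or the variable itself. -/
def isAssign (σ : Sub) : Prop :=
  ∀ v, σ v = .inl true ∨ σ v = .inl false ∨ σ v = .inr (v, true)

/-- The variables of a clause. -/
def varsClause (C : Clause) : Finset Var := C.image Prod.fst

/-- The variables of a CNF. -/
def varsCNF (Γ : CNF) : Finset Var := (Γ.map varsClause).sup

/-- Membership in the domain of an assignment. -/
def subDom (σ : Sub) (v : Var) : Prop := ∃ b : Bool, σ v = .inl b

/-- `C` is cost-PR w.r.t. `Γ`: cost-SR witnessed by an assignment. -/
def CostPR (B : Finset Var) (Γ : CNF) (C : Clause) : Prop :=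
  ∃ σ, CostSRwit B Γ C σ ∧ isAssign σ

/-- `C` is cost-SPR w.r.t. `Γ`: cost-SR witnessed by an assignment with
domain `dom(¬C) = Var(C)`. -/
def CostSPR (B : Finset Var) (Γ : CNF) (C : Clause) : Prop :=
  ∃ σ, CostSRwit B Γ C σ ∧ isAssign σ ∧ (∀ v, subDom σ v ↔ v ∈ varsClause C)

/-- `C` is cost-LPR w.r.t. `Γ`: cost-SR witnessed by an assignment with
domain `dom(¬C)` differing from `¬C` on exactly one variable. -/
def CostLPR (B : Finset Var) (Γ : CNF) (C : Clause) : Prop :=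
  ∃ σ, CostSRwit B Γ C σ ∧ isAssign σ ∧ (∀ v, subDom σ v ↔ v ∈ varsClause C) ∧
    ((varsClause C).filter (fun v => σ v ≠ negSub C v)).card = 1

/-- `D` is a resolvent of `E₁` and `E₂`. -/
def resolvent (D E₁ E₂ : Clause) : Prop :=
  ∃ x : Var, (x, true) ∈ E₁ ∧ (x, false) ∈ E₂ ∧
    D = E₁.erase (x, true) ∪ E₂.erase (x, false)

/-- A derivation from `Γ` in the calculus with redundancy rule `Red`:
every clause of the list is in `Γ`, a weakening of an earlier clause,
a resolvent of two earlier clauses, or redundant (w.r.t. `Red`) relative to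
`Γ` together with the earlier clauses, using no new variables. -/
def IsDeriv (Red : Finset Var → CNF → Clause → Prop) (B : Finset Var) (Γ : CNF)
    (L : List Clause) : Prop :=
  ∀ i, ∀ hi : i < L.length,
    L[i] ∈ Γ ∨
    (∃ j, ∃ hj : j < i, L[j]'(hj.trans hi) ⊆ L[i]) ∨
    (∃ j k, ∃ hj : j < i, ∃ hk : k < i,
      resolvent L[i] (L[j]'(hj.trans hi)) (L[k]'(hk.trans hi))) ∨
    (Red B (Γ + (↑(L.take i) : CNF)) L[i] ∧ varsClause L[i] ⊆ varsCNF Γ)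

/-- `C ∨ ℓ` is a cost blocked clause (cost-BC) w.r.t. `Γ` and `ℓ`. -/
def CostBC (B : Finset Var) (Γ : CNF) (C : Clause) (l : Lit) : Prop :=
  (∀ D ∈ Γ, negLit l ∈ D → isTaut (C ∪ D.erase (negLit l))) ∧
  ¬(l.2 = true ∧ l.1 ∈ B)

/-- Hamming distance between two total assignments, over the variables in `V`. -/
def HD (V : Finset Var) (α β : TAssign) : ℕ := (V.filter (fun v => α v ≠ β v)).card

/-- `flip(C, σ) ≥ d` : some total assignment `τ` extending `¬C` has
Hamming distance (over `V`) at least `d` from `τ ∘ σ`. -/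
def flipGE (V : Finset Var) (C : Clause) (σ : Sub) (d : ℕ) : Prop :=
  ∃ τ : TAssign, extendsNeg τ C ∧ d ≤ HD V τ (comp τ σ)


/-- One step of a MaxSAT resolution + cost-SR derivation on a pair
`(H, S)` of hard and soft clauses:
(a) add to `H` a resolvent of two clauses of `H`;
(a') add to `H` a clause which is cost-SR w.r.t. `H`;
(b) copy a clause of `H` into `S`;
(c) replace a soft clause `C` by `C ∨ x` and `C ∨ ¬x`;
(d) replace soft clauses `C ∨ x` and `C ∨ ¬x` by `C`. -/
inductive MRStep (B : Finset Var) : CNF × CNF → CNF × CNF → Prop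
  | res {H S : CNF} {C E₁ E₂ : Clause} :
      E₁ ∈ H → E₂ ∈ H → resolvent C E₁ E₂ → MRStep B (H, S) (C ::ₘ H, S)
  | sr {H S : CNF} {C : Clause} :
      CostSR B H C → MRStep B (H, S) (C ::ₘ H, S)
  | copy {H S : CNF} {C : Clause} :
      C ∈ H → MRStep B (H, S) (H, C ::ₘ S)
  | split {H S : CNF} {C : Clause} (x : Var) :
      C ∈ S →
      MRStep B (H, S)
        (H, insert ((x, true) : Lit) C ::ₘ insert ((x, false) : Lit) C ::ₘ S.erase C)
  | merge {H S : CNF} {C : Clause} (x : Var) :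
      insert ((x, true) : Lit) C ∈ S → insert ((x, false) : Lit) C ∈ S →
      MRStep B (H, S)
        (H, C ::ₘ ((S.erase (insert ((x, true) : Lit) C)).erase
              (insert ((x, false) : Lit) C)))

/-! ### Auxiliary machinery for the soundness proof -/

/-- Boolean value of a literal under a total assignment. -/
def evalLit (α : TAssign) (l : Lit) : Bool := if l.2 then α l.1 else !(α l.1)

/-- Boolean value of a substitution value under a total assignment. -/
def evalSV (α : TAssign) : SubVal → Bool
  | .inl b => b
  | .inr l => evalLit α l

lemma evalLit_eq {α : TAssign} {l : Lit} : (α l.1 = l.2) ↔ evalLit α l = true := by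
  cases l with | mk x s => cases s <;> simp [evalLit]

lemma evalSV_neg (α : TAssign) (s : SubVal) : evalSV α (negSV s) = !evalSV α s := by
  cases s with
  | inl b => rfl
  | inr l => cases l with | mk x p => cases p <;> simp [negSV, evalSV, negLit, evalLit]

lemma comp_eval (α : TAssign) (σ : Sub) (v : Var) : comp α σ v = evalSV α (σ v) := by
  cases h : σ v <;> simp [comp, h, evalSV, evalLit]

lemma evalLit_comp (α : TAssign) (σ : Sub) (l : Lit) :
    evalLit (comp α σ) l = evalSV α (appLit σ l) := by
  cases l with | mk x s =>
  cases s
  · simp [evalLit, appLit, comp_eval, evalSV_neg]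
  · simp [evalLit, appLit, comp_eval]

lemma satC_iff_evalLit {α : TAssign} {C : Clause} :
    satC α C ↔ ∃ l ∈ C, evalLit α l = true := by
  unfold satC; simp only [evalLit_eq]

lemma mem_restrictClause {σ : Sub} {C : Clause} {m : Lit} :
    m ∈ restrictClause σ C ↔ ∃ l ∈ C, appLit σ l = .inr m := by
  simp only [restrictClause, Finset.mem_biUnion]
  constructor
  · rintro ⟨l, hl, hm⟩
    refine ⟨l, hl, ?_⟩
    cases h : appLit σ l <;> rw [h] at hm <;> simp at hm
    rw [hm]
  · rintro ⟨l, hl, hm⟩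
    exact ⟨l, hl, by rw [hm]; simp⟩

lemma satC_comp_iff {α : TAssign} {σ : Sub} {C : Clause} :
    satC (comp α σ) C ↔ clauseTrue σ C ∨ satC α (restrictClause σ C) := by
  rw [satC_iff_evalLit]
  constructor
  · rintro ⟨l, hl, he⟩
    rw [evalLit_comp] at he
    cases h : appLit σ l with
    | inl bb =>
      left
      refine ⟨l, hl, ?_⟩
      rw [h] at he ⊢
      cases bb
      · exact absurd he (by simp [evalSV])
      · rfl
    | inr mm =>
      right
      rw [satC_iff_evalLit]
      exact ⟨mm, mem_restrictClause.2 ⟨l, hl, h⟩, by rw [h] at he; exact he⟩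
  · rintro (⟨l, hl, h⟩ | hs)
    · exact ⟨l, hl, by rw [evalLit_comp, h]; rfl⟩
    · rw [satC_iff_evalLit] at hs
      obtain ⟨mm, hm, he⟩ := hs
      obtain ⟨l, hl, h⟩ := mem_restrictClause.1 hm
      exact ⟨l, hl, by rw [evalLit_comp, h]; exact he⟩

lemma mem_restrictCNF {σ : Sub} {Γ : CNF} {D : Clause} :
    D ∈ restrictCNF σ Γ ↔ ∃ C ∈ Γ, ¬ clauseTrue σ C ∧ restrictClause σ C = D := by
  simp only [restrictCNF, Multiset.mem_map, Multiset.mem_filter]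
  tauto

lemma satCNF_comp_iff {α : TAssign} {σ : Sub} {Γ : CNF} :
    satCNF (comp α σ) Γ ↔ satCNF α (restrictCNF σ Γ) := by
  constructor
  · intro h D hD
    obtain ⟨C, hC, hnt, rfl⟩ := mem_restrictCNF.1 hD
    rcases satC_comp_iff.1 (h C hC) with ht | hs
    · exact absurd ht hnt
    · exact hs
  · intro h C hC
    by_cases ht : clauseTrue σ C
    · exact satC_comp_iff.2 (Or.inl ht)
    · exact satC_comp_iff.2 (Or.inr (h _ (mem_restrictCNF.2 ⟨C, hC, ht, rfl⟩)))

lemma UPFalse_unsat {Γ : CNF} (h : UPFalse Γ) : ∀ α : TAssign, ¬ satCNF α Γ := by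
  induction h with
  | empty hmem =>
    intro α hα
    have := hα _ hmem
    simp [satC] at this
  | step l hmem _ ih =>
    intro α hα
    have hl : α l.1 = l.2 := by
      obtain ⟨mm, hm, he⟩ := hα _ hmem
      rw [Finset.mem_singleton] at hm
      subst hm; exact he
    have hcomp : comp α (litSub l) = α := by
      funext v
      by_cases hv : v = l.1
      · subst hv; simp [comp, litSub, hl]
      · simp [comp, litSub, hv]
    exact ih α (satCNF_comp_iff.1 (by rw [hcomp]; exact hα))

lemma not_satC_iff {α : TAssign} {C : Clause} :
    ¬ satC α C ↔ ∀ l ∈ C, α l.1 = !l.2 := by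
  simp only [satC, not_exists]
  constructor
  · intro h l hl
    have := h l
    cases hb : l.2 <;> cases ha : α l.1 <;> simp_all
  · rintro h l ⟨hl, hc⟩
    have := h l hl
    rw [this] at hc
    cases l.2 <;> simp_all

lemma upimplies_sat {Γ : CNF} {D : Clause} {α : TAssign}
    (h : UPimplies Γ D) (hα : satCNF α Γ) : satC α D := by
  by_contra hns
  apply UPFalse_unsat h α
  intro E hE
  rcases Multiset.mem_add.1 hE with hE | hE
  · exact hα _ hE
  · simp only [negUnits, Multiset.mem_map] at hE
    obtain ⟨l, hl, rfl⟩ := hE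
    have hl' : l ∈ D := hl
    have := not_satC_iff.1 hns l hl'
    exact ⟨negLit l, Finset.mem_singleton_self _, by simpa [negLit] using this⟩

lemma costSR_apply {B : Finset Var} {Γ : CNF} {C : Clause} {σ : Sub} {τ : TAssign}
    (h : CostSRwit B Γ C σ) (hτ : satCNF τ Γ) (hC : ¬ satC τ C) :
    satCNF (comp τ σ) (C ::ₘ Γ) ∧ cost B (comp τ σ) ≤ cost B τ := by
  have hext : extendsNeg τ C := not_satC_iff.1 hC
  have hcomp : comp τ (negSub C) = τ := by
    funext v
    by_cases h1 : ((v, true) : Lit) ∈ C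
    · simp [comp, negSub, h1, hext _ h1]
    · by_cases h2 : ((v, false) : Lit) ∈ C
      · simp [comp, negSub, h1, h2, hext _ h2]
      · simp [comp, negSub, h1, h2]
  have hres : satCNF τ (restrictCNF (negSub C) Γ) :=
    satCNF_comp_iff.1 (by rw [hcomp]; exact hτ)
  have h2 : satCNF τ (restrictCNF σ (C ::ₘ Γ)) := fun D hD => upimplies_sat (h.1 D hD) hres
  exact ⟨satCNF_comp_iff.2 h2, h.2 τ hext⟩

lemma resolvent_sound {α : TAssign} {D E₁ E₂ : Clause} (h : resolvent D E₁ E₂)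
    (h1 : satC α E₁) (h2 : satC α E₂) : satC α D := by
  obtain ⟨x, hx1, hx2, rfl⟩ := h
  cases hαx : α x
  · obtain ⟨l, hl, he⟩ := h1
    refine ⟨l, Finset.mem_union_left _ (Finset.mem_erase.2 ⟨?_, hl⟩), he⟩
    rintro rfl; simp_all
  · obtain ⟨l, hl, he⟩ := h2
    refine ⟨l, Finset.mem_union_right _ (Finset.mem_erase.2 ⟨?_, hl⟩), he⟩
    rintro rfl; simp_all

/-- Number of clauses of `S` falsified by `α`. -/
def fals (α : TAssign) (S : CNF) : ℕ := Multiset.card (S.filter fun C => ¬ satC α C)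

lemma fals_cons {α : TAssign} {C : Clause} {S : CNF} :
    fals α (C ::ₘ S) = (if satC α C then 0 else 1) + fals α S := by
  unfold fals
  rw [Multiset.filter_cons]
  by_cases h : satC α C <;> simp [h, Nat.add_comm]

lemma satC_insert {α : TAssign} {l : Lit} {C : Clause} :
    satC α (insert l C) ↔ α l.1 = l.2 ∨ satC α C := by
  unfold satC
  simp [Finset.mem_insert, or_and_right, exists_or]

lemma fals_split {α : TAssign} {S : CNF} {C : Clause} {x : Var} (hC : C ∈ S) :
    fals α (insert ((x, true) : Lit) C ::ₘ insert ((x, false) : Lit) C ::ₘ S.erase C)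
      = fals α S := by
  conv_rhs => rw [← Multiset.cons_erase hC]
  rw [fals_cons, fals_cons, fals_cons]
  by_cases hc : satC α C
  · simp [satC_insert, hc]
  · cases hx : α x <;> simp [satC_insert, hc, hx]

lemma fals_merge {α : TAssign} {S : CNF} {C : Clause} {x : Var}
    (h1 : insert ((x, true) : Lit) C ∈ S) (h2 : insert ((x, false) : Lit) C ∈ S) :
    fals α (C ::ₘ ((S.erase (insert ((x, true) : Lit) C)).erase
        (insert ((x, false) : Lit) C))) ≤ fals α S := by
  by_cases hD : insert ((x, true) : Lit) C = insert ((x, false) : Lit) C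
  · have hxt : ((x, true) : Lit) ∈ C := by
      have : ((x, true) : Lit) ∈ insert ((x, false) : Lit) C := hD ▸ Finset.mem_insert_self _ _
      rcases Finset.mem_insert.1 this with h | h
      · simp at h
      · exact h
    have hCD : insert ((x, true) : Lit) C = C := Finset.insert_eq_self.2 hxt
    have h1' : C ∈ S := hCD ▸ h1
    rw [← hD, hCD]
    by_cases hmem : C ∈ S.erase C
    · have hS : S = C ::ₘ C ::ₘ (S.erase C).erase C := by
        conv_rhs => rw [Multiset.cons_erase hmem, Multiset.cons_erase h1']
      conv_rhs => rw [hS]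
      rw [fals_cons, fals_cons, fals_cons]
      omega
    · rw [Multiset.erase_of_notMem hmem, Multiset.cons_erase h1']
  · have h2' : insert ((x, false) : Lit) C ∈ S.erase (insert ((x, true) : Lit) C) :=
      (Multiset.mem_erase_of_ne (Ne.symm hD)).2 h2
    have hS : S = insert ((x, true) : Lit) C ::ₘ insert ((x, false) : Lit) C ::ₘ
        ((S.erase (insert ((x, true) : Lit) C)).erase (insert ((x, false) : Lit) C)) := by
      conv_rhs => rw [Multiset.cons_erase h2', Multiset.cons_erase h1]
    conv_rhs => rw [hS]
    rw [fals_cons, fals_cons, fals_cons]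
    by_cases hc : satC α C
    · simp [satC_insert, hc]
    · cases hx : α x <;> simp [satC_insert, hc, hx]

lemma satCNF_cons {α : TAssign} {C : Clause} {Γ : CNF} :
    satCNF α (C ::ₘ Γ) ↔ satC α C ∧ satCNF α Γ := by
  constructor
  · intro h
    exact ⟨h _ (Multiset.mem_cons_self _ _), fun D hD => h _ (Multiset.mem_cons_of_mem hD)⟩
  · rintro ⟨h1, h2⟩ D hD
    rcases Multiset.mem_cons.1 hD with rfl | hD
    · exact h1
    · exact h2 _ hD

/-- The invariant preserved by MaxSAT resolution + cost-SR steps. -/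
def GoodInv (B : Finset Var) (H0 : CNF) (p : CNF × CNF) : Prop :=
  (∀ τ : TAssign, satCNF τ p.1 → fals τ p.2 ≤ cost B τ) ∧
  (∀ τ : TAssign, satCNF τ H0 → ∃ τ', satCNF τ' p.1 ∧ cost B τ' ≤ cost B τ)

lemma step_good {B : Finset Var} {H0 : CNF} {p q : CNF × CNF}
    (hs : MRStep B p q) (hg : GoodInv B H0 p) : GoodInv B H0 q := by
  obtain ⟨hA, hB⟩ := hg
  cases hs with
  | @res H S C E₁ E₂ hE1 hE2 hres =>
    refine ⟨fun τ hτ => hA τ (satCNF_cons.1 hτ).2, fun τ hτ => ?_⟩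
    obtain ⟨τ', hτ', hc⟩ := hB τ hτ
    exact ⟨τ', satCNF_cons.2 ⟨resolvent_sound hres (hτ' _ hE1) (hτ' _ hE2), hτ'⟩, hc⟩
  | @sr H S C hsr =>
    refine ⟨fun τ hτ => hA τ (satCNF_cons.1 hτ).2, fun τ hτ => ?_⟩
    obtain ⟨τ', hτ', hc⟩ := hB τ hτ
    obtain ⟨σ, hw⟩ := hsr
    by_cases hC : satC τ' C
    · exact ⟨τ', satCNF_cons.2 ⟨hC, hτ'⟩, hc⟩
    · obtain ⟨hs1, hs2⟩ := costSR_apply hw hτ' hC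
      exact ⟨comp τ' σ, hs1, hs2.trans hc⟩
  | @copy H S C hC =>
    refine ⟨fun τ hτ => ?_, hB⟩
    rw [fals_cons, if_pos (hτ _ hC)]
    simpa using hA τ hτ
  | @split H S C x hC =>
    refine ⟨fun τ hτ => ?_, hB⟩
    rw [fals_split hC]
    exact hA τ hτ
  | @merge H S C x h1 h2 =>
    exact ⟨fun τ hτ => (fals_merge h1 h2).trans (hA τ hτ), hB⟩

lemma deriv_good {B : Finset Var} {H0 S0 : CNF} {p : CNF × CNF}
    (h0 : GoodInv B H0 (H0, S0))
    (hder : Relation.ReflTransGen (MRStep B) (H0, S0) p) : GoodInv B H0 p := by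
  induction hder with
  | refl => exact h0
  | tail _ hstep ih => exact step_good hstep ih

lemma fals_S0 {m : ℕ} (b : Fin m → Var) (hinj : Function.Injective b) (α : TAssign) :
    fals α (↑((List.finRange m).map fun i => ({((b i, false) : Lit)} : Clause)) : CNF)
      = cost (Finset.image b Finset.univ) α := by
  have hcost : cost (Finset.image b Finset.univ) α
      = (Finset.univ.filter fun i => α (b i) = true).card := by
    unfold cost
    have : (Finset.image b Finset.univ).filter (fun v => α v = true)
        = Finset.image b (Finset.univ.filter fun i => α (b i) = true) := by
      ext v
      simp only [Finset.mem_filter, Finset.mem_image, Finset.mem_univ, true_and]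
      constructor
      · rintro ⟨⟨i, rfl⟩, hv⟩; exact ⟨i, hv, rfl⟩
      · rintro ⟨i, hv, rfl⟩; exact ⟨⟨i, rfl⟩, hv⟩
    rw [this, Finset.card_image_of_injective _ hinj]
  rw [hcost]
  unfold fals
  rw [Fin.univ_def, Finset.card_def, Finset.filter_val]
  rw [← Multiset.map_coe, Multiset.filter_map, Multiset.card_map]
  apply congrArg
  apply Multiset.filter_congr
  intro i _
  simp [satC, Function.comp]

/-- soundness of MaxSAT resolution + cost-SR: if a MaxSAT
resolution + cost-SR derivation from `(H₀, S₀)` with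
`H₀ = {C₁∨b₁,…,C_m∨b_m}` satisfiable and `S₀ = {¬b₁,…,¬b_m}` reaches a pair
`(H_t, S_t)` in which the empty clause occurs with multiplicity at least `k`,
then `cost(H₀) ≥ k`, i.e. every total assignment satisfying `H₀` falsifies at
least `k` clauses of `S₀`. -/
theorem maxsat_res_costSR_soundness (m : ℕ) (b : Fin m → Var)
    (Cs : Fin m → Clause) (hinj : Function.Injective b)
    (H0 S0 : CNF)
    (hH0 : H0 = (↑((List.finRange m).map fun i => insert ((b i, true) : Lit) (Cs i)) : CNF))
    (hS0 : S0 = (↑((List.finRange m).map fun i => ({((b i, false) : Lit)} : Clause)) : CNF))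
    (hsat : ∃ α : TAssign, satCNF α H0)
    (Ht St : CNF) (k : ℕ)
    (hder : Relation.ReflTransGen (MRStep (Finset.image b Finset.univ)) (H0, S0) (Ht, St))
    (hbot : k ≤ St.count (∅ : Clause)) :
    k ≤ costCNF (Finset.image b Finset.univ) H0 ∧
    ∀ α : TAssign, satCNF α H0 →
      k ≤ Multiset.card (S0.filter fun C => ¬ satC α C) := by
  have key : ∀ τ : TAssign, satCNF τ H0 → k ≤ cost (Finset.image b Finset.univ) τ := by
    have hinit : GoodInv (Finset.image b Finset.univ) H0 (H0, S0) := by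
      refine ⟨fun τ _ => ?_, fun τ hτ => ⟨τ, hτ, le_rfl⟩⟩
      have : fals τ S0 = cost (Finset.image b Finset.univ) τ := by
        rw [hS0]; exact fals_S0 b hinj τ
      exact le_of_eq this
    have hfin := deriv_good hinit hder
    intro τ hτ
    obtain ⟨τ', hτ', hc⟩ := hfin.2 τ hτ
    have h1 : St.count (∅ : Clause) ≤ fals τ' St := by
      unfold fals
      calc St.count (∅ : Clause) = (St.filter fun C => ¬ satC τ' C).count (∅ : Clause) := by
            rw [Multiset.count_filter, if_pos (by simp [satC])]
        _ ≤ Multiset.card (St.filter fun C => ¬ satC τ' C) := Multiset.count_le_card _ _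
    have h2 := hfin.1 τ' hτ'
    exact le_trans hbot (le_trans h1 (le_trans h2 hc))
  refine ⟨?_, ?_⟩
  · unfold costCNF
    apply le_csInf
    · obtain ⟨α, hα⟩ := hsat
      exact ⟨_, α, hα, rfl⟩
    · rintro n ⟨α, hα, rfl⟩
      exact key α hα
  · intro α hα
    have : Multiset.card (S0.filter fun C => ¬ satC α C) = cost (Finset.image b Finset.univ) α := by
      rw [hS0]; exact fals_S0 b hinj α
    rw [this]
    exact key α hα

end PaperMaxSAT
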